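/- Let H be a complex Hilbert space, φ : H → H bounded and invertible, and (P, D(P)) a densely defined closable operator. Let P^φ = φ P* φ⁻¹ be the left φ-adjoint and, for a densely defined operator Q, let Q^{tφ} = (φ*) Q* (φ*)⁻¹ be the right φ-adjoint. Then (P^φ)^{tφ} equals the closure of P; in particular if P is closed then (P^φ)^{tφ} = P. -/

import Mathlib

/-- The conjugate `φ T φ⁻¹` of a partially defined operator `T` by a bounded invertible map `φ`,
with domain `φ D(T)`. -/
noncomputable def conjPMap {H : Type*} [NormedAddCommGroup H] [InnerProductSpace ℂ H]
    (φ : H ≃L[ℂ] H) (T : H →ₗ.[ℂ] H) : H →ₗ.[ℂ] H where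
  domain := T.domain.map (φ.toLinearEquiv : H →ₗ[ℂ] H)
  toFun := ((φ.toLinearEquiv : H →ₗ[ℂ] H).comp T.toFun).comp
    (φ.toLinearEquiv.submoduleMap T.domain).symm.toLinearMap

open LinearPMap
open scoped ComplexConjugate

section Aux

variable {H : Type*} [NormedAddCommGroup H] [InnerProductSpace ℂ H]

theorem conjPMap_apply (φ : H ≃L[ℂ] H) (T : H →ₗ.[ℂ] H) (u : T.domain)
    (h : (φ (u : H) : H) ∈ (conjPMap φ T).domain) :
    conjPMap φ T ⟨φ (u : H), h⟩ = φ (T u) := by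
  show ((((φ.toLinearEquiv : H →ₗ[ℂ] H).comp T.toFun).comp
    (φ.toLinearEquiv.submoduleMap T.domain).symm.toLinearMap)) _ = _
  have : ((φ.toLinearEquiv.submoduleMap T.domain).symm ⟨φ (u : H), h⟩ : T.domain) = u := by
    apply (φ.toLinearEquiv.submoduleMap T.domain).injective
    rw [LinearEquiv.apply_symm_apply]
    ext
    rfl
  exact congrArg (fun v => φ (T.toFun v)) this

theorem conjPMap_graph (φ : H ≃L[ℂ] H) (T : H →ₗ.[ℂ] H) (a b : H) :
    (a, b) ∈ (conjPMap φ T).graph ↔ (φ.symm a, φ.symm b) ∈ T.graph := by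
  simp only [LinearPMap.mem_graph_iff]
  constructor
  · rintro ⟨⟨y, hy⟩, h1, h2⟩
    obtain ⟨u, hu, rfl⟩ := hy
    refine ⟨⟨u, hu⟩, ?_, ?_⟩
    · simp only at h1
      simp [← h1]
    · have h3 := conjPMap_apply φ T ⟨u, hu⟩ ⟨u, hu, rfl⟩
      rw [← h2]
      erw [h3]
      simp
  · rintro ⟨⟨u, hu⟩, h1, h2⟩
    have hm : (φ u : H) ∈ (conjPMap φ T).domain := ⟨u, hu, rfl⟩
    refine ⟨⟨φ u, hm⟩, ?_, ?_⟩
    · simp only at h1 ⊢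
      rw [show u = φ.symm a from h1]
      simp
    · rw [conjPMap_apply φ T ⟨u, hu⟩, h2]
      simp

variable [CompleteSpace H]

local notation "⟪" x ", " y "⟫" => @inner ℂ _ _ x y

noncomputable def graphL2 (P : H →ₗ.[ℂ] H) : Submodule ℂ (WithLp 2 (H × H)) :=
  P.graph.comap (WithLp.linearEquiv 2 ℂ (H × H) : WithLp 2 (H × H) →ₗ[ℂ] H × H)

theorem mem_graphL2 (P : H →ₗ.[ℂ] H) (x y : H) :
    (WithLp.equiv 2 (H × H)).symm (x, y) ∈ graphL2 P ↔ (x, y) ∈ P.graph := by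
  simp [graphL2, Submodule.mem_comap]

theorem mem_graphL2_orth (P : H →ₗ.[ℂ] H) (hP : Dense (P.domain : Set H)) (a b : H) :
    (WithLp.equiv 2 (H × H)).symm (a, b) ∈ (graphL2 P)ᗮ ↔ (b, -a) ∈ P.adjoint.graph := by
  rw [Submodule.mem_orthogonal]
  constructor
  · intro h
    have key : ∀ x : P.domain, ⟪(-a : H), (x : H)⟫ = ⟪b, P x⟫ := by
      intro x
      have h1 := h ((WithLp.equiv 2 (H × H)).symm ((x : H), P x))
        ((mem_graphL2 P _ _).2 (P.mem_graph x))
      rw [WithLp.prod_inner_apply] at h1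
      simp only [WithLp.equiv_symm_apply, WithLp.toLp_fst, WithLp.toLp_snd] at h1
      rw [inner_neg_left]
      have h2 : ⟪P x, b⟫ = -⟪(x : H), a⟫ := by linear_combination h1
      calc -⟪a, (x:H)⟫ = -(starRingEnd ℂ) ⟪(x : H), a⟫ := by rw [inner_conj_symm]
        _ = (starRingEnd ℂ) ⟪P x, b⟫ := by rw [h2]; simp
        _ = ⟪b, P x⟫ := inner_conj_symm _ _
    have hb : b ∈ P.adjoint.domain := P.mem_adjoint_domain_of_exists b ⟨-a, key⟩
    rw [LinearPMap.mem_graph_iff]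
    exact ⟨⟨b, hb⟩, rfl, LinearPMap.adjoint_apply_eq hP ⟨b, hb⟩ key⟩
  · intro hg v hv
    rw [LinearPMap.mem_graph_iff] at hg
    obtain ⟨⟨b', hb⟩, hb1, hb2⟩ := hg
    simp only at hb1; subst hb1
    simp only at hb2
    rw [graphL2, Submodule.mem_comap, LinearPMap.mem_graph_iff] at hv
    obtain ⟨x, hx1, hx2⟩ := hv
    rw [WithLp.prod_inner_apply]
    simp only [WithLp.equiv_symm_apply, WithLp.toLp_fst, WithLp.toLp_snd]
    have hx1' : (x : H) = (WithLp.ofLp v).1 := hx1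
    have hx2' : (P x : H) = (WithLp.ofLp v).2 := hx2
    rw [← hx1', ← hx2']
    have h3 : ⟪P.adjoint ⟨b', hb⟩, (x : H)⟫ = ⟪b', P x⟫ :=
      LinearPMap.adjoint_isFormalAdjoint hP ⟨b', hb⟩ x
    rw [hb2] at h3
    have h4 : ⟪P x, b'⟫ = (starRingEnd ℂ) ⟪b', P x⟫ := (inner_conj_symm _ _).symm
    rw [← h3] at h4
    rw [h4]
    simp [inner_neg_left]

theorem mem_closure_graphL2 (P : H →ₗ.[ℂ] H) (y z : H) :
    (y, z) ∈ P.graph.topologicalClosure ↔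
      (WithLp.equiv 2 (H × H)).symm (y, z) ∈ (graphL2 P).topologicalClosure := by
  have hset : (graphL2 P : Set (WithLp 2 (H × H))) =
      ⇑(WithLp.prodContinuousLinearEquiv 2 ℂ H H).toHomeomorph ⁻¹' (P.graph : Set (H × H)) := rfl
  rw [← SetLike.mem_coe, ← SetLike.mem_coe, Submodule.topologicalClosure_coe,
    Submodule.topologicalClosure_coe, hset,
    ← (WithLp.prodContinuousLinearEquiv 2 ℂ H H).toHomeomorph.preimage_closure]
  rw [Set.mem_preimage]
  have : (WithLp.prodContinuousLinearEquiv 2 ℂ H H).toHomeomorph ((WithLp.equiv 2 (H × H)).symm (y, z))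
      = (y, z) := rfl
  rw [this]

theorem adjoint_domain_dense (P : H →ₗ.[ℂ] H) (hP : Dense (P.domain : Set H))
    (hPc : P.IsClosable) : Dense (P.adjoint.domain : Set H) := by
  rw [Submodule.dense_iff_topologicalClosure_eq_top, Submodule.topologicalClosure_eq_top_iff]
  rw [Submodule.eq_bot_iff]
  intro v hv
  rw [Submodule.mem_orthogonal] at hv
  have hmem : (0, v) ∈ P.graph.topologicalClosure := by
    rw [mem_closure_graphL2, ← Submodule.orthogonal_orthogonal_eq_closure,
      Submodule.mem_orthogonal]
    intro w hw
    have hw' : (WithLp.equiv 2 (H × H)).symm ((WithLp.equiv 2 (H × H)) w) ∈ (graphL2 P)ᗮ := by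
      simpa using hw
    rw [mem_graphL2_orth P hP] at hw'
    have hb : ((WithLp.equiv 2 (H × H)) w).2 ∈ P.adjoint.domain :=
      LinearPMap.mem_domain_of_mem_graph hw'
    rw [WithLp.prod_inner_apply]
    simp only [WithLp.equiv_symm_apply, WithLp.toLp_fst, WithLp.toLp_snd, inner_zero_right]
    have := hv _ hb
    have e2 : ((WithLp.equiv 2 (H × H)) w).2 = (WithLp.ofLp w).2 := rfl
    rw [e2] at this
    rw [this, add_zero]
  rw [hPc.graph_closure_eq_closure_graph] at hmem
  exact P.closure.graph_fst_eq_zero_snd hmem rfl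

theorem adjoint_adjoint_graph (P : H →ₗ.[ℂ] H) (hP : Dense (P.domain : Set H))
    (hPc : P.IsClosable) : P.adjoint.adjoint.graph = P.graph.topologicalClosure := by
  have hP' : Dense (P.adjoint.domain : Set H) := adjoint_domain_dense P hP hPc
  ext ⟨y, z⟩
  rw [mem_closure_graphL2, ← Submodule.orthogonal_orthogonal_eq_closure]
  constructor
  · intro hg
    rw [LinearPMap.mem_graph_iff] at hg
    obtain ⟨⟨y', hy⟩, hy1, hy2⟩ := hg
    simp only at hy1 hy2
    subst hy1
    rw [Submodule.mem_orthogonal]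
    intro w hw
    have hw' : (WithLp.equiv 2 (H × H)).symm ((WithLp.equiv 2 (H × H)) w) ∈ (graphL2 P)ᗮ := by
      simpa using hw
    rw [mem_graphL2_orth P hP, LinearPMap.mem_graph_iff] at hw'
    obtain ⟨⟨b, hb⟩, hb1, hb2⟩ := hw'
    simp only at hb1 hb2
    rw [WithLp.prod_inner_apply]
    simp only [WithLp.equiv_symm_apply, WithLp.toLp_fst, WithLp.toLp_snd]
    have key : ⟪P.adjoint.adjoint ⟨y', hy⟩, b⟫ = ⟪y', P.adjoint ⟨b, hb⟩⟫ :=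
      LinearPMap.adjoint_isFormalAdjoint hP' ⟨y', hy⟩ ⟨b, hb⟩
    rw [hy2] at key
    have hb1' : b = (WithLp.ofLp w).2 := hb1
    rw [← hb1']
    have h4 : ⟪b, z⟫ = (starRingEnd ℂ) ⟪z, b⟫ := (inner_conj_symm _ _).symm
    rw [key] at h4
    have hb2' : (P.adjoint ⟨b, hb⟩ : H) = -(WithLp.ofLp w).1 := hb2
    rw [hb2'] at h4
    rw [h4]
    simp [inner_neg_right]
  · intro hcl
    rw [Submodule.mem_orthogonal] at hcl
    have key : ∀ x : P.adjoint.domain, ⟪z, (x : H)⟫ = ⟪y, P.adjoint x⟫ := by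
      intro x
      have hw : (WithLp.equiv 2 (H × H)).symm (-(P.adjoint x), (x : H)) ∈ (graphL2 P)ᗮ := by
        rw [mem_graphL2_orth P hP, neg_neg]
        exact P.adjoint.mem_graph x
      have h0 := hcl _ hw
      rw [WithLp.prod_inner_apply] at h0
      simp only [WithLp.equiv_symm_apply, WithLp.toLp_fst, WithLp.toLp_snd, inner_neg_left] at h0
      have h1 : ⟪(x : H), z⟫ = ⟪P.adjoint x, y⟫ := by linear_combination h0
      calc ⟪z, (x : H)⟫ = (starRingEnd ℂ) ⟪(x : H), z⟫ := (inner_conj_symm _ _).symm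
        _ = (starRingEnd ℂ) ⟪P.adjoint x, y⟫ := by rw [h1]
        _ = ⟪y, P.adjoint x⟫ := inner_conj_symm _ _
    have hy : y ∈ P.adjoint.adjoint.domain :=
      P.adjoint.mem_adjoint_domain_of_exists y ⟨z, key⟩
    rw [LinearPMap.mem_graph_iff]
    exact ⟨⟨y, hy⟩, rfl, LinearPMap.adjoint_apply_eq hP' ⟨y, hy⟩ key⟩

theorem adjoint_adjoint_eq_closure (P : H →ₗ.[ℂ] H) (hP : Dense (P.domain : Set H))
    (hPc : P.IsClosable) : P.adjoint.adjoint = P.closure :=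
  LinearPMap.eq_of_eq_graph <| by
    rw [adjoint_adjoint_graph P hP hPc, hPc.graph_closure_eq_closure_graph]

theorem conjPMap_domain_dense (φ : H ≃L[ℂ] H) (T : H →ₗ.[ℂ] H)
    (hT : Dense (T.domain : Set H)) : Dense ((conjPMap φ T).domain : Set H) := by
  have : ((conjPMap φ T).domain : Set H) = φ '' (T.domain : Set H) := by
    ext x
    simp [conjPMap, Submodule.mem_map]
  rw [this]
  exact φ.surjective.denseRange.dense_image φ.continuous hT

theorem conjPMap_adjoint (φ φstar : H ≃L[ℂ] H)
    (hstar : ∀ x y : H, (inner ℂ (φstar x) y : ℂ) = (inner ℂ x (φ y) : ℂ))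
    (T : H →ₗ.[ℂ] H) (hT : Dense (T.domain : Set H)) :
    (conjPMap φ T).adjoint = conjPMap φstar.symm T.adjoint := by
  have hA : Dense ((conjPMap φ T).domain : Set H) := conjPMap_domain_dense φ T hT
  apply LinearPMap.eq_of_eq_graph
  ext ⟨a, b⟩
  rw [conjPMap_graph]
  simp only [ContinuousLinearEquiv.symm_symm]
  constructor
  · intro hg
    rw [LinearPMap.mem_graph_iff] at hg
    obtain ⟨⟨a', ha⟩, ha1, ha2⟩ := hg
    simp only at ha1 ha2
    subst ha1
    have key : ∀ u : T.domain, ⟪φstar b, (u : H)⟫ = ⟪φstar a', T u⟫ := by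
      intro u
      have hm : (φ (u : H) : H) ∈ (conjPMap φ T).domain := ⟨u, u.2, rfl⟩
      have h1 : ⟪(conjPMap φ T).adjoint ⟨a', ha⟩, φ (u : H)⟫ =
          ⟪a', conjPMap φ T ⟨φ (u : H), hm⟩⟫ :=
        LinearPMap.adjoint_isFormalAdjoint hA ⟨a', ha⟩ ⟨φ (u : H), hm⟩
      rw [ha2, conjPMap_apply φ T u hm] at h1
      rw [hstar b, hstar a']
      exact h1
    have hdom : φstar a' ∈ T.adjoint.domain :=
      T.mem_adjoint_domain_of_exists (φstar a') ⟨φstar b, key⟩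
    rw [LinearPMap.mem_graph_iff]
    exact ⟨⟨φstar a', hdom⟩, rfl, LinearPMap.adjoint_apply_eq hT ⟨φstar a', hdom⟩ key⟩
  · intro hg
    rw [LinearPMap.mem_graph_iff] at hg
    obtain ⟨⟨a', ha⟩, ha1, ha2⟩ := hg
    simp only at ha1 ha2
    have key : ∀ w : (conjPMap φ T).domain, ⟪b, (w : H)⟫ = ⟪a, conjPMap φ T w⟫ := by
      rintro ⟨w, hw⟩
      obtain ⟨u, hu, rfl⟩ := hw
      have hm : (φ u : H) ∈ (conjPMap φ T).domain := ⟨u, hu, rfl⟩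
      show (⟪b, φ ((⟨u, hu⟩ : T.domain) : H)⟫ : ℂ) =
        ⟪a, conjPMap φ T ⟨φ ((⟨u, hu⟩ : T.domain) : H), hm⟩⟫
      rw [conjPMap_apply φ T ⟨u, hu⟩ hm]
      calc (⟪b, φ u⟫ : ℂ) = ⟪φstar b, u⟫ := (hstar b u).symm
        _ = ⟪T.adjoint ⟨a', ha⟩, u⟫ := by rw [ha2]
        _ = ⟪a', T ⟨u, hu⟩⟫ := LinearPMap.adjoint_isFormalAdjoint hT ⟨a', ha⟩ ⟨u, hu⟩
        _ = ⟪φstar a, T ⟨u, hu⟩⟫ := by rw [ha1]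
        _ = ⟪a, φ (T ⟨u, hu⟩)⟫ := hstar a _
    have hdomA : a ∈ (conjPMap φ T).adjoint.domain :=
      (conjPMap φ T).mem_adjoint_domain_of_exists a ⟨b, key⟩
    rw [LinearPMap.mem_graph_iff]
    exact ⟨⟨a, hdomA⟩, rfl, LinearPMap.adjoint_apply_eq hA ⟨a, hdomA⟩ key⟩

theorem conjPMap_conjPMap (ψ : H ≃L[ℂ] H) (S : H →ₗ.[ℂ] H) :
    conjPMap ψ (conjPMap ψ.symm S) = S := by
  apply LinearPMap.eq_of_eq_graph
  ext ⟨a, b⟩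
  rw [conjPMap_graph, conjPMap_graph]
  simp

theorem closure_eq_of_isClosed (P : H →ₗ.[ℂ] H) (h : P.IsClosed) : P.closure = P :=
  LinearPMap.eq_of_eq_graph <| by
    rw [← h.isClosable.graph_closure_eq_closure_graph]
    exact IsClosed.submodule_topologicalClosure_eq h

end Aux

/-- for a densely defined closable `P`, with `P^φ = φ P* φ⁻¹` (left `φ`-adjoint) and
`Q^{tφ} = φ* Q* (φ*)⁻¹` (right `φ`-adjoint), one has `(P^φ)^{tφ} = P̄`, the closure of `P`;
in particular `(P^φ)^{tφ} = P` when `P` is closed. -/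
theorem stmt_4 (H : Type*) [NormedAddCommGroup H] [InnerProductSpace ℂ H] [CompleteSpace H]
    (P : H →ₗ.[ℂ] H) (hP : Dense (P.domain : Set H)) (hPc : P.IsClosable)
    (φ φstar : H ≃L[ℂ] H)
    (hstar : ∀ x y : H, (inner ℂ (φstar x) y : ℂ) = (inner ℂ x (φ y) : ℂ)) :
    conjPMap φstar ((conjPMap φ P.adjoint).adjoint) = P.closure ∧
    (P.IsClosed → conjPMap φstar ((conjPMap φ P.adjoint).adjoint) = P) := by
  have hP' : Dense (P.adjoint.domain : Set H) := adjoint_domain_dense P hP hPc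
  have h2 : conjPMap φstar ((conjPMap φ P.adjoint).adjoint) = P.closure := by
    rw [conjPMap_adjoint φ φstar hstar P.adjoint hP', conjPMap_conjPMap,
      adjoint_adjoint_eq_closure P hP hPc]
  exact ⟨h2, fun hcl => by rw [h2, closure_eq_of_isClosed P hcl]⟩
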